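/- The function f(t) = H((1+√t)/2), where H is the binary entropy, is concave on the interval [0,1]. -/

import Mathlib

lemma key_ineq {s : ℝ} (h0 : 0 < s) (h1 : s < 1) :
    Real.log (1 + s) - Real.log (1 - s) ≤ 2 * s / (1 - s ^ 2) := by
  have hs1 : (0:ℝ) < 1 - s := by linarith
  have hx : (0:ℝ) < (1 + s) / (1 - s) := by positivity
  have h1x : (1:ℝ) ≤ (1 + s) / (1 - s) := by rw [le_div_iff₀ hs1]; linarith
  have hlog : 0 ≤ Real.log ((1 + s) / (1 - s)) := Real.log_nonneg h1x
  have hsinh := Real.self_le_sinh_iff.mpr hlog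
  rw [Real.sinh_log hx] at hsinh
  calc Real.log (1 + s) - Real.log (1 - s)
      = Real.log ((1 + s) / (1 - s)) := (Real.log_div (by positivity) hs1.ne').symm
    _ ≤ ((1 + s) / (1 - s) - ((1 + s) / (1 - s))⁻¹) / 2 := hsinh
    _ = 2 * s / (1 - s ^ 2) := by
        have hs2 : (0:ℝ) < 1 - s ^ 2 := by nlinarith
        rw [inv_div]
        field_simp [hs2.ne']
        ring

/-- Binary entropy with base-2 logarithm, `H(q) = -q log₂ q - (1-q) log₂ (1-q)`
(with the convention `log₂ 0 = 0`, so `H 0 = H 1 = 0`). -/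
noncomputable def binEntropy2 (q : ℝ) : ℝ :=
  -q * Real.logb 2 q - (1 - q) * Real.logb 2 (1 - q)

/-- The function `t ↦ H((1 + √t)/2)` is concave on `[0,1]`. -/
theorem stmt_2 :
    ConcaveOn ℝ (Set.Icc (0 : ℝ) 1) (fun t => binEntropy2 ((1 + Real.sqrt t) / 2)) := by
  have hlog2 : (0:ℝ) < Real.log 2 := Real.log_pos one_lt_two
  have hmain : ConcaveOn ℝ (Set.Icc (0:ℝ) 1)
      (fun t => Real.binEntropy ((1 + Real.sqrt t) / 2)) := by
    apply concaveOn_of_hasDerivWithinAt2_nonpos (convex_Icc 0 1)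
      (f' := fun t => (Real.log (1 - Real.sqrt t) - Real.log (1 + Real.sqrt t)) /
        (4 * Real.sqrt t))
      (f'' := fun t =>
        (((1 - Real.sqrt t)⁻¹ * -(1 / (2 * Real.sqrt t)) -
            (1 + Real.sqrt t)⁻¹ * (1 / (2 * Real.sqrt t))) * (4 * Real.sqrt t) -
          (Real.log (1 - Real.sqrt t) - Real.log (1 + Real.sqrt t)) *
            (4 * (1 / (2 * Real.sqrt t)))) / (4 * Real.sqrt t) ^ 2)
    · exact (Real.binEntropy_continuous.comp (by continuity)).continuousOn
    · intro t ht
      rw [interior_Icc] at ht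
      obtain ⟨ht0, ht1⟩ := ht
      have hs0 : 0 < Real.sqrt t := Real.sqrt_pos.mpr ht0
      have hs1 : Real.sqrt t < 1 := by
        rw [show (1:ℝ) = Real.sqrt 1 by simp]
        exact Real.sqrt_lt_sqrt ht0.le ht1
      have h1s : (0:ℝ) < 1 - Real.sqrt t := by linarith
      have hsq := Real.hasDerivAt_sqrt ht0.ne'
      have hp : HasDerivAt (fun t => (1 + Real.sqrt t) / 2) (1 / (2 * Real.sqrt t) / 2) t :=
        (hsq.const_add 1).div_const 2
      have hp0 : (1 + Real.sqrt t) / 2 ≠ 0 := by positivity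
      have hp1 : (1 + Real.sqrt t) / 2 ≠ 1 := by
        have : (1 + Real.sqrt t) / 2 < 1 := by linarith
        exact this.ne
      have hC := (Real.hasDerivAt_binEntropy hp0 hp1).comp t hp
      have hEq : (Real.log (1 - Real.sqrt t) - Real.log (1 + Real.sqrt t)) /
          (4 * Real.sqrt t) =
          (Real.log (1 - (1 + Real.sqrt t) / 2) - Real.log ((1 + Real.sqrt t) / 2)) *
            (1 / (2 * Real.sqrt t) / 2) := by
        rw [show 1 - (1 + Real.sqrt t) / 2 = (1 - Real.sqrt t) / 2 by ring,
          Real.log_div h1s.ne' two_ne_zero,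
          Real.log_div (by positivity : (0:ℝ) < 1 + Real.sqrt t).ne' two_ne_zero]
        field_simp
        ring
      rw [hEq]
      exact hC.hasDerivWithinAt
    · intro t ht
      rw [interior_Icc] at ht
      obtain ⟨ht0, ht1⟩ := ht
      have hs0 : 0 < Real.sqrt t := Real.sqrt_pos.mpr ht0
      have hs1 : Real.sqrt t < 1 := by
        rw [show (1:ℝ) = Real.sqrt 1 by simp]
        exact Real.sqrt_lt_sqrt ht0.le ht1
      have h1s : (0:ℝ) < 1 - Real.sqrt t := by linarith
      have hsq := Real.hasDerivAt_sqrt ht0.ne'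
      have hN1 : HasDerivAt (fun t => Real.log (1 - Real.sqrt t))
          ((1 - Real.sqrt t)⁻¹ * -(1 / (2 * Real.sqrt t))) t :=
        by have := (Real.hasDerivAt_log h1s.ne').comp t (hsq.const_sub 1); exact this
      have hN2 : HasDerivAt (fun t => Real.log (1 + Real.sqrt t))
          ((1 + Real.sqrt t)⁻¹ * (1 / (2 * Real.sqrt t))) t :=
        by have := (Real.hasDerivAt_log (by positivity : (0:ℝ) < 1 + Real.sqrt t).ne').comp t
            (hsq.const_add 1); exact this
      have hD : HasDerivAt (fun t => 4 * Real.sqrt t) (4 * (1 / (2 * Real.sqrt t))) t :=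
        hsq.const_mul 4
      exact ((hN1.sub hN2).div hD (by positivity)).hasDerivWithinAt
    · intro t ht
      rw [interior_Icc] at ht
      obtain ⟨ht0, ht1⟩ := ht
      have hs0 : 0 < Real.sqrt t := Real.sqrt_pos.mpr ht0
      have hs1 : Real.sqrt t < 1 := by
        rw [show (1:ℝ) = Real.sqrt 1 by simp]
        exact Real.sqrt_lt_sqrt ht0.le ht1
      set s := Real.sqrt t with hs
      have h1s : (0:ℝ) < 1 - s := by linarith
      have h2s : (0:ℝ) < 1 + s := by linarith
      have hs2 : (0:ℝ) < 1 - s ^ 2 := by nlinarith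
      apply div_nonpos_of_nonpos_of_nonneg _ (by positivity)
      have hnum : ((1 - s)⁻¹ * -(1 / (2 * s)) - (1 + s)⁻¹ * (1 / (2 * s))) * (4 * s) -
          (Real.log (1 - s) - Real.log (1 + s)) * (4 * (1 / (2 * s))) =
          (2 / s) * ((Real.log (1 + s) - Real.log (1 - s)) - 2 * s / (1 - s ^ 2)) := by
        field_simp
        ring
      rw [hnum]
      exact mul_nonpos_of_nonneg_of_nonpos (by positivity)
        (sub_nonpos.mpr (key_ineq hs0 hs1))
  have heq : ∀ q : ℝ, binEntropy2 q = (Real.log 2)⁻¹ • Real.binEntropy q := by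
    intro q
    simp only [binEntropy2, Real.binEntropy, Real.logb, Real.log_inv, smul_eq_mul,
      div_eq_mul_inv]
    ring
  simp only [heq]
  exact hmain.smul (inv_nonneg.mpr hlog2.le)
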